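/- Let d ≥ 1, let f : ℝ^d → ℝ be differentiable, and let φ : ℝ^d → ℝ be a convex differentiable function. Assume: (a) ‖∇f(x)‖ → ∞ as ‖x‖ → ∞; (c) liminf_{‖x‖→∞} ⟨∇f(x), x⟩/(‖∇f(x)‖·‖x‖) > 0; and (d) the limit lim_{‖x‖→∞} ‖∇φ(x)‖/‖∇f(x)‖ exists and is strictly less than 1. Then liminf_{‖x‖→∞} ⟨∇f(x) + ∇φ(x), x⟩/(‖∇f(x) + ∇φ(x)‖·‖x‖) > 0. -/

import Mathlib

open Filter

/-- The filter of sets `{x : ‖x‖ ≥ R}`, `R → ∞`. -/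
noncomputable def normAtTop (d : ℕ) : Filter (EuclideanSpace ℝ (Fin d)) :=
  Filter.comap (fun x => ‖x‖) Filter.atTop

lemma grad_inner_mono {d : ℕ} (φ : EuclideanSpace ℝ (Fin d) → ℝ)
    (hφ : Differentiable ℝ φ) (hc : ConvexOn ℝ Set.univ φ)
    (x : EuclideanSpace ℝ (Fin d)) :
    (inner ℝ (gradient φ 0) x : ℝ) ≤ inner ℝ (gradient φ x) x := by
  have hline : ∀ t : ℝ,
      HasDerivAt (fun t : ℝ => φ (t • x)) (inner ℝ (gradient φ (t • x)) x : ℝ) t := by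
    intro t
    have h1 : HasFDerivAt φ
        ((InnerProductSpace.toDual ℝ _) (gradient φ (t • x))) (t • x) :=
      hasGradientAt_iff_hasFDerivAt.1 (hφ (t • x)).hasGradientAt
    have h2 : HasDerivAt (fun t : ℝ => t • x) x t := by
      simpa using (hasDerivAt_id t).smul_const x
    simpa [Function.comp_def] using h1.comp_hasDerivAt t h2
  have hconv : ConvexOn ℝ Set.univ (fun t : ℝ => φ (t • x)) := by
    have := hc.comp_affineMap ((LinearMap.toSpanSingleton ℝ _ x).toAffineMap)
    simpa [Function.comp_def] using this
  have h1 := hconv.le_slope_of_hasDerivAt (Set.mem_univ (0 : ℝ)) (Set.mem_univ 1)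
    one_pos (hline 0)
  have h2 := hconv.slope_le_of_hasDerivAt (Set.mem_univ (0 : ℝ)) (Set.mem_univ 1)
    one_pos (hline 1)
  have := h1.trans h2
  simpa using this


lemma arith_aux (e c' N P S X IF IP G0 : ℝ) (he : 0 < e) (hc'1 : c' < 1)
    (hX : 0 < X) (hN : 0 < N) (hIF : e * (N * X) < IF) (hP : P < c' * N)
    (hG0 : G0 ≤ e / 4 * N) (hIP : -(G0 * X) ≤ IP) (hG0n : 0 ≤ G0)
    (hSub : S ≤ N + P) (hSlb : N ≤ S + P) :
    e / 8 ≤ (IF + IP) / (S * X) := by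
  have hS0 : 0 < S := by nlinarith
  rw [le_div_iff₀ (mul_pos hS0 hX)]
  have h2N : S ≤ 2 * N := by nlinarith
  have hIPl : -(e / 4 * (N * X)) ≤ IP := by
    have := mul_le_mul_of_nonneg_right hG0 hX.le
    nlinarith
  have h1 : e / 8 * (S * X) ≤ e / 4 * (N * X) := by
    have := mul_le_mul_of_nonneg_right h2N hX.le
    nlinarith
  nlinarith [mul_pos hN hX]

theorem stmt3 (d : ℕ) (hd : 1 ≤ d)
    (f φ : EuclideanSpace ℝ (Fin d) → ℝ)
    (hf : Differentiable ℝ f) (hφ : Differentiable ℝ φ)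
    (hφconv : ConvexOn ℝ Set.univ φ)
    (ha : Tendsto (fun x => ‖gradient f x‖) (normAtTop d) atTop)
    (hc : (0 : EReal) < Filter.liminf
      (fun x => (((inner ℝ (gradient f x) x : ℝ) / (‖gradient f x‖ * ‖x‖) : ℝ) : EReal))
      (normAtTop d))
    (hd' : ∃ c : ℝ, c < 1 ∧
      Tendsto (fun x => ‖gradient φ x‖ / ‖gradient f x‖) (normAtTop d) (nhds c)) :
    (0 : EReal) < Filter.liminf
      (fun x => (((inner ℝ (gradient f x + gradient φ x) x : ℝ)
        / (‖gradient f x + gradient φ x‖ * ‖x‖) : ℝ) : EReal)) (normAtTop d) := by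
  obtain ⟨c, hc1, hct⟩ := hd'
  obtain ⟨e, he0, helt⟩ := EReal.exists_between_coe_real hc
  have he0' : (0 : ℝ) < e := by exact_mod_cast he0
  -- eventual bounds
  have hE3 : ∀ᶠ x in normAtTop d,
      (e : EReal) < (((inner ℝ (gradient f x) x : ℝ) / (‖gradient f x‖ * ‖x‖) : ℝ) : EReal) :=
    eventually_lt_of_lt_liminf helt
  set c' : ℝ := (c + 1) / 2 with hc'def
  have hcc' : c < c' := by rw [hc'def]; linarith
  have hc'1 : c' < 1 := by rw [hc'def]; linarith
  have hE4 : ∀ᶠ x in normAtTop d, ‖gradient φ x‖ / ‖gradient f x‖ < c' :=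
    hct.eventually (gt_mem_nhds hcc')
  have htend : Tendsto (fun x : EuclideanSpace ℝ (Fin d) => ‖x‖) (normAtTop d) atTop :=
    tendsto_comap
  have hE1 : ∀ᶠ x in normAtTop d, (1 : ℝ) ≤ ‖x‖ := htend.eventually_ge_atTop 1
  set M : ℝ := max 1 (4 * ‖gradient φ 0‖ / e) with hMdef
  have hE2 : ∀ᶠ x in normAtTop d, M ≤ ‖gradient f x‖ := ha.eventually_ge_atTop M
  set δ : ℝ := e / 8 with hδdef
  have hδ0 : (0 : ℝ) < δ := by positivity
  have key : ∀ᶠ x in normAtTop d,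
      (δ : EReal) ≤ (((inner ℝ (gradient f x + gradient φ x) x : ℝ)
        / (‖gradient f x + gradient φ x‖ * ‖x‖) : ℝ) : EReal) := by
    filter_upwards [hE1, hE2, hE3, hE4] with x hx1 hxM hxe hxr
    have hF0 : (0 : ℝ) < ‖gradient f x‖ := lt_of_lt_of_le one_pos (le_trans (le_max_left _ _) hxM)
    have hx0 : (0 : ℝ) < ‖x‖ := lt_of_lt_of_le one_pos hx1
    have hxe' : e < (inner ℝ (gradient f x) x : ℝ) / (‖gradient f x‖ * ‖x‖) := by
      exact_mod_cast hxe
    have hnum_f : e * (‖gradient f x‖ * ‖x‖) < (inner ℝ (gradient f x) x : ℝ) :=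
      (lt_div_iff₀ (mul_pos hF0 hx0)).1 hxe'
    have hφb : ‖gradient φ x‖ < c' * ‖gradient f x‖ := by
      have := (div_lt_iff₀ hF0).1 hxr
      linarith
    have hφ0b : ‖gradient φ 0‖ ≤ e / 4 * ‖gradient f x‖ := by
      have h1 : 4 * ‖gradient φ 0‖ / e ≤ M := le_max_right _ _
      have h2 : 4 * ‖gradient φ 0‖ / e ≤ ‖gradient f x‖ := h1.trans hxM
      rw [div_le_iff₀ he0'] at h2
      nlinarith
    have hinner_φ : -(‖gradient φ 0‖ * ‖x‖) ≤ (inner ℝ (gradient φ x) x : ℝ) := by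
      refine le_trans ?_ (grad_inner_mono φ hφ hφconv x)
      have := abs_real_inner_le_norm (gradient φ 0) x
      linarith [neg_abs_le (inner ℝ (gradient φ 0) x : ℝ)]
    have hSub : ‖gradient f x + gradient φ x‖ ≤ ‖gradient f x‖ + ‖gradient φ x‖ :=
      norm_add_le _ _
    have hSlb : ‖gradient f x‖ ≤ ‖gradient f x + gradient φ x‖ + ‖gradient φ x‖ := by
      have h2 := norm_add_le (gradient f x + gradient φ x) (-(gradient φ x))
      simpa using h2
    have hIsum : (inner ℝ (gradient f x + gradient φ x) x : ℝ)
        = (inner ℝ (gradient f x) x : ℝ) + (inner ℝ (gradient φ x) x : ℝ) :=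
      inner_add_left _ _ _
    have hfin : δ ≤ (inner ℝ (gradient f x + gradient φ x) x : ℝ)
        / (‖gradient f x + gradient φ x‖ * ‖x‖) := by
      rw [hIsum, hδdef]
      exact arith_aux e c' _ _ _ _ _ _ _ he0' hc'1 hx0 hF0 hnum_f hφb hφ0b hinner_φ
        (norm_nonneg _) hSub hSlb
    exact_mod_cast hfin
  have h1 : (δ : EReal) ≤ Filter.liminf
      (fun x => (((inner ℝ (gradient f x + gradient φ x) x : ℝ)
        / (‖gradient f x + gradient φ x‖ * ‖x‖) : ℝ) : EReal)) (normAtTop d) :=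
    le_liminf_of_le (by isBoundedDefault) key
  exact lt_of_lt_of_le (by exact_mod_cast hδ0) h1
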